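/- If f is a feasible allocation with ∑_n f(n) < F_s, then there exists a feasible allocation f' with ∑_n f'(n) ≤ F_s such that max_n (c(n) + ε(n)/f'(n)) < max_n (c(n) + ε(n)/f(n)); consequently, any allocation minimizing the per-round training time must use the full server budget, ∑_n f(n) = F_s. -/

import Mathlib

/-- If a feasible allocation `f` does not use the full server budget (`∑ n, f n < Fs`),
then there is a feasible allocation `f'` with strictly smaller per-round training time;
consequently, any allocation minimizing the per-round training time uses the full budget. -/
theorem slack_allocation_improvable_and_minimizer_uses_full_budget
    {N : ℕ} (hN : 1 ≤ N) (ε c : Fin N → ℝ) (hε : ∀ n, 0 < ε n)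
    (Fs : ℝ) (hFs : 0 < Fs) :
    (∀ f : Fin N → ℝ, (∀ n, 0 < f n) → (∑ n, f n < Fs) →
      ∃ f' : Fin N → ℝ, (∀ n, 0 < f' n) ∧ (∑ n, f' n ≤ Fs) ∧
        Finset.univ.sup' ⟨⟨0, hN⟩, Finset.mem_univ _⟩ (fun n => c n + ε n / f' n) <
          Finset.univ.sup' ⟨⟨0, hN⟩, Finset.mem_univ _⟩ (fun n => c n + ε n / f n)) ∧
    (∀ f : Fin N → ℝ, (∀ n, 0 < f n) → (∑ n, f n ≤ Fs) →
      (∀ g : Fin N → ℝ, (∀ n, 0 < g n) → (∑ n, g n ≤ Fs) →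
        Finset.univ.sup' ⟨⟨0, hN⟩, Finset.mem_univ _⟩ (fun n => c n + ε n / f n) ≤
          Finset.univ.sup' ⟨⟨0, hN⟩, Finset.mem_univ _⟩ (fun n => c n + ε n / g n)) →
      ∑ n, f n = Fs) := by
  have key : ∀ f : Fin N → ℝ, (∀ n, 0 < f n) → (∑ n, f n < Fs) →
      ∃ f' : Fin N → ℝ, (∀ n, 0 < f' n) ∧ (∑ n, f' n ≤ Fs) ∧
        Finset.univ.sup' ⟨⟨0, hN⟩, Finset.mem_univ _⟩ (fun n => c n + ε n / f' n) <
          Finset.univ.sup' ⟨⟨0, hN⟩, Finset.mem_univ _⟩ (fun n => c n + ε n / f n) := by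
    intro f hf hsum
    have hS : 0 < ∑ n, f n :=
      Finset.sum_pos (fun n _ => hf n) ⟨⟨0, hN⟩, Finset.mem_univ _⟩
    set S := ∑ n, f n with hSdef
    have hr : 1 < Fs / S := (one_lt_div hS).mpr hsum
    refine ⟨fun n => f n * (Fs / S), ?_, ?_, ?_⟩
    · intro n; exact mul_pos (hf n) (lt_trans one_pos hr)
    · have : ∑ n, f n * (Fs / S) = S * (Fs / S) := by
        rw [← Finset.sum_mul]
      rw [this, mul_div_cancel₀ _ (ne_of_gt hS)]
    · refine (Finset.sup'_lt_iff (H := _)).mpr ?_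
      intro n _
      have h1 : f n < f n * (Fs / S) := by
        nlinarith [hf n]
      have h2 : ε n / (f n * (Fs / S)) < ε n / f n :=
        div_lt_div_of_pos_left (hε n) (hf n) h1
      calc c n + ε n / (f n * (Fs / S)) < c n + ε n / f n := by linarith
        _ ≤ _ := Finset.le_sup' (fun n => c n + ε n / f n) (Finset.mem_univ n)
  refine ⟨key, ?_⟩
  intro f hf hsum hmin
  by_contra h
  have hlt : ∑ n, f n < Fs := lt_of_le_of_ne hsum h
  obtain ⟨f', hf', hsum', hless⟩ := key f hf hlt
  exact absurd (hmin f' hf' hsum') (not_le.mpr hless)
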